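/- Let G be a finite group and W a finite-dimensional complex vector space carrying a representation of G. Then W admits a G-invariant real structure (a conjugate-linear map R : W → W with R∘R = id_W commuting with the action of every element of G) if and only if there exists a nondegenerate G-invariant symmetric ℂ-bilinear form on W. -/

import Mathlib

/-- A real structure on a complex vector space: a conjugate-linear involution. -/
def IsRealStructure {W : Type*} [AddCommGroup W] [Module ℂ W] (R : W → W) : Prop :=
  (∀ x y : W, R (x + y) = R x + R y) ∧
  (∀ (a : ℂ) (x : W), R (a • x) = (starRingEnd ℂ a) • R x) ∧
  (∀ x : W, R (R x) = x)

open scoped ComplexConjugate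

local notation "⟪" x ", " y "⟫" => @inner ℂ _ _ x y

section Aux
variable {G : Type*} [Group G] {W : Type*} [NormedAddCommGroup W]
  [InnerProductSpace ℂ W] [FiniteDimensional ℂ W]

lemma aux_forward (ρ : Representation ℂ G W)
    (hinv : ∀ (s : G) (x y : W), ⟪ρ s x, ρ s y⟫ = ⟪x, y⟫)
    (R : W → W) (hR : IsRealStructure R) (hRρ : ∀ (s : G) (x : W), R (ρ s x) = ρ s (R x)) :
    ∃ B : LinearMap.BilinForm ℂ W,
      (∀ x y : W, B x y = B y x) ∧
      (∀ (s : G) (x y : W), B (ρ s x) (ρ s y) = B x y) ∧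
      (∀ x : W, (∀ y : W, B x y = 0) → x = 0) := by
  obtain ⟨hadd, hsmul, hinvol⟩ := hR
  refine ⟨LinearMap.mk₂ ℂ (fun x y => ⟪R x, y⟫ + ⟪R y, x⟫) ?_ ?_ ?_ ?_, ?_, ?_, ?_⟩
  · intro x x' y; rw [hadd]; simp [inner_add_left, inner_add_right]; ring
  · intro a x y; rw [hsmul]; simp [inner_smul_left, inner_smul_right]; ring
  · intro x y y'; rw [hadd]; simp [inner_add_left, inner_add_right]; ring
  · intro a x y; rw [hsmul]; simp [inner_smul_left, inner_smul_right]; ring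
  · intro x y; simp [LinearMap.mk₂_apply]; ring
  · intro s x y; simp only [LinearMap.mk₂_apply, hRρ, hinv]
  · intro x h
    have h1 := h (R x)
    simp only [LinearMap.mk₂_apply, hinvol] at h1
    have h2 : (RCLike.re ⟪R x, R x⟫ : ℝ) + RCLike.re ⟪x, x⟫ = 0 := by
      have := congrArg RCLike.re h1
      simpa using this
    have h3 : RCLike.re ⟪x, x⟫ = 0 := by
      have := inner_self_nonneg (𝕜 := ℂ) (x := R x)
      have := inner_self_nonneg (𝕜 := ℂ) (x := x)
      linarith
    exact inner_self_eq_zero.mp (by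
      have : ⟪x, x⟫ = 0 := by
        have him := inner_self_im (𝕜 := ℂ) x
        exact RCLike.ext (by simpa using h3) (by simpa using him)
      exact this)

end Aux

section Back
variable {G : Type*} [Group G] {W : Type*} [NormedAddCommGroup W]
  [InnerProductSpace ℂ W] [FiniteDimensional ℂ W]

lemma aux_backward (ρ : Representation ℂ G W)
    (hinv : ∀ (s : G) (x y : W), ⟪ρ s x, ρ s y⟫ = ⟪x, y⟫)
    (B : LinearMap.BilinForm ℂ W)
    (hsymm : ∀ x y : W, B x y = B y x)
    (hBinv : ∀ (s : G) (x y : W), B (ρ s x) (ρ s y) = B x y)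
    (hnd : ∀ x : W, (∀ y : W, B x y = 0) → x = 0) :
    ∃ R : W → W, IsRealStructure R ∧ ∀ (s : G) (x : W), R (ρ s x) = ρ s (R x) := by
  haveI : CompleteSpace W := FiniteDimensional.complete ℂ W
  have hcancel : ∀ (s : G) (y : W), ρ s (ρ s⁻¹ y) = y := by
    intro s y
    rw [← Module.End.mul_apply, ← map_mul, mul_inv_cancel, map_one, Module.End.one_apply]
  -- the conjugate-linear map C with ⟪C x, y⟫ = B x y
  let C : W →ₗ⋆[ℂ] W :=
    { toFun := fun x => (InnerProductSpace.toDual ℂ W).symm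
        (LinearMap.toContinuousLinearMap (B x))
      map_add' := by intro x y; rw [map_add, map_add, map_add]
      map_smul' := by
        intro a x
        rw [map_smul, map_smul, LinearIsometryEquiv.map_smulₛₗ] }
  have hC : ∀ x y : W, ⟪C x, y⟫ = B x y := by
    intro x y
    show ⟪(InnerProductSpace.toDual ℂ W).symm _, y⟫ = _
    rw [InnerProductSpace.toDual_symm_apply]
    rfl
  have hC0 : ∀ x : W, C x = 0 → x = 0 := by
    intro x hx
    refine hnd x fun y => ?_
    rw [← hC, hx, inner_zero_left]
  have hCρ : ∀ (s : G) (x : W), C (ρ s x) = ρ s (C x) := by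
    intro s x
    refine ext_inner_right ℂ fun y => ?_
    have h1 : ⟪ρ s (C x), y⟫ = ⟪C x, ρ s⁻¹ y⟫ := by
      conv_lhs => rw [show y = ρ s (ρ s⁻¹ y) from (hcancel s y).symm]
      rw [hinv]
    rw [hC, h1, hC, ← hBinv s x (ρ s⁻¹ y), hcancel]
  have hCsym : ∀ x y : W, ⟪C x, y⟫ = ⟪C y, x⟫ := by
    intro x y; rw [hC, hC, hsymm]
  -- P = C ∘ C is a positive symmetric linear operator
  let P : W →ₗ[ℂ] W :=
    { toFun := fun x => C (C x)
      map_add' := by intro x y; simp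
      map_smul' := by intro a x; simp }
  have hPsym : P.IsSymmetric := by
    intro x y
    show ⟪C (C x), y⟫ = ⟪x, C (C y)⟫
    rw [hCsym (C x) y, ← inner_conj_symm x, hCsym (C y) x, inner_conj_symm]
  have hPρ : ∀ (s : G) (x : W), P (ρ s x) = ρ s (P x) := by
    intro s x; show C (C (ρ s x)) = ρ s (C (C x)); rw [hCρ, hCρ]
  set n := Module.finrank ℂ W with hn'
  have hn : Module.finrank ℂ W = n := rfl
  set b := hPsym.eigenvectorBasis hn with hb
  set μ := hPsym.eigenvalues hn with hμ
  have hPb : ∀ i, P (b i) = (μ i : ℂ) • b i := fun i => hPsym.apply_eigenvectorBasis hn i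
  have hμpos : ∀ i, 0 < μ i := by
    intro i
    have h1 : ⟪P (b i), b i⟫ = (μ i : ℂ) := by
      rw [hPb i, inner_smul_left, inner_self_eq_norm_sq_to_K, b.orthonormal.1 i]
      simp
    have h2 : ⟪P (b i), b i⟫ = ((‖C (b i)‖ ^ 2 : ℝ) : ℂ) := by
      show ⟪C (C (b i)), b i⟫ = _
      rw [hCsym (C (b i)) (b i), inner_self_eq_norm_sq_to_K]
      norm_cast
    have h3 : (μ i : ℝ) = ‖C (b i)‖ ^ 2 := by
      have h := h1.symm.trans h2
      exact_mod_cast h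
    have h4 : C (b i) ≠ 0 := fun h => b.toBasis.ne_zero i (by
      have := hC0 (b i) h; simpa [b.coe_toBasis] using this)
    rw [h3]
    exact pow_pos (norm_pos_iff.mpr h4) 2
  -- the "inverse square root" of P
  set S : W →ₗ[ℂ] W :=
    b.toBasis.constr ℂ (fun i => (((Real.sqrt (μ i))⁻¹ : ℝ) : ℂ) • b i) with hS
  have hSb : ∀ i, S (b i) = (((Real.sqrt (μ i))⁻¹ : ℝ) : ℂ) • b i := by
    intro i
    have h := b.toBasis.constr_basis ℂ (fun i => (((Real.sqrt (μ i))⁻¹ : ℝ) : ℂ) • b i) i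
    rw [b.coe_toBasis] at h
    exact h
  have key : ∀ (r : ℝ) (v : W), P v = (r : ℂ) • v →
      S v = (((Real.sqrt r)⁻¹ : ℝ) : ℂ) • v := by
    intro r v hv
    have hrep : ∀ i, (μ i : ℂ) * b.repr v i = (r : ℂ) * b.repr v i := by
      intro i
      have h1 := hPsym.eigenvectorBasis_apply_self_apply hn v i
      rw [hv, map_smul] at h1
      simpa using h1.symm
    conv_lhs => rw [← b.sum_repr v]
    conv_rhs => rw [← b.sum_repr v]
    rw [map_sum, Finset.smul_sum]
    refine Finset.sum_congr rfl fun i _ => ?_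
    rw [map_smul, hSb]
    by_cases hc : b.repr v i = 0
    · rw [hc]; simp
    · have hμr : μ i = r := by
        have h2 : (μ i : ℂ) = (r : ℂ) := mul_right_cancel₀ hc (hrep i)
        exact_mod_cast h2
      rw [hμr, smul_comm]
  have hPCb : ∀ i, P (C (b i)) = ((μ i : ℝ) : ℂ) • C (b i) := by
    intro i
    have h0 : P (C (b i)) = C (P (b i)) := rfl
    rw [h0, hPb, LinearMap.map_smulₛₗ, Complex.conj_ofReal]
  have hSCb : ∀ i, S (C (b i)) = C (S (b i)) := by
    intro i
    rw [key (μ i) (C (b i)) (hPCb i), hSb, LinearMap.map_smulₛₗ, Complex.conj_ofReal]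
  have hSC : ∀ v, S (C v) = C (S v) := by
    intro v
    conv_lhs => rw [← b.sum_repr v]
    conv_rhs => rw [← b.sum_repr v]
    rw [map_sum, map_sum, map_sum, map_sum]
    refine Finset.sum_congr rfl fun i _ => ?_
    rw [LinearMap.map_smulₛₗ C, S.map_smul, S.map_smul, LinearMap.map_smulₛₗ C, hSCb]
  have hSρ : ∀ (s : G) (v : W), S (ρ s v) = ρ s (S v) := by
    intro s v
    conv_lhs => rw [← b.sum_repr v]
    conv_rhs => rw [← b.sum_repr v]
    rw [map_sum, map_sum, map_sum, map_sum]
    refine Finset.sum_congr rfl fun i _ => ?_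
    rw [map_smul, map_smul, map_smul, map_smul]
    congr 1
    have h1 : P (ρ s (b i)) = ((μ i : ℝ) : ℂ) • ρ s (b i) := by
      rw [hPρ, hPb, map_smul]
    rw [key (μ i) _ h1, hSb, map_smul]
  have hw : ∀ i, ((μ i : ℝ) : ℂ) * ((((Real.sqrt (μ i))⁻¹ : ℝ) : ℂ) *
      ((((Real.sqrt (μ i))⁻¹ : ℝ) : ℂ))) = 1 := by
    intro i
    have : (μ i : ℝ) * ((Real.sqrt (μ i))⁻¹ * (Real.sqrt (μ i))⁻¹) = 1 := by
      rw [← mul_inv, Real.mul_self_sqrt (hμpos i).le]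
      exact mul_inv_cancel₀ (ne_of_gt (hμpos i))
    exact_mod_cast this
  have hSSP : ∀ v, S (S (P v)) = v := by
    intro v
    conv_lhs => rw [← b.sum_repr v]
    conv_rhs => rw [← b.sum_repr v]
    rw [map_sum, map_sum, map_sum]
    refine Finset.sum_congr rfl fun i _ => ?_
    simp only [map_smul, hPb, hSb, smul_smul, mul_assoc]
    rw [hw, mul_one]
  refine ⟨fun x => S (C x), ⟨?_, ?_, ?_⟩, ?_⟩
  · intro x y; dsimp only; rw [map_add, map_add]
  · intro a x; dsimp only; rw [LinearMap.map_smulₛₗ C, S.map_smul]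
  · intro x
    dsimp only
    have h1 : C (S (C x)) = S (C (C x)) := (hSC (C x)).symm
    rw [h1]
    exact hSSP x
  · intro s x; dsimp only; rw [hCρ, hSρ]

end Back

/-- A finite-dimensional complex representation of a finite group `G` admits a
`G`-invariant real structure iff it admits a nondegenerate `G`-invariant symmetric bilinear
form. -/
theorem invariant_real_structure_iff_nondeg_invariant_symm_form
    {G : Type*} [Group G] [Finite G]
    {W : Type*} [AddCommGroup W] [Module ℂ W] [FiniteDimensional ℂ W]
    (ρ : Representation ℂ G W) :
    (∃ R : W → W, IsRealStructure R ∧ ∀ (s : G) (x : W), R (ρ s x) = ρ s (R x)) ↔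
      (∃ B : LinearMap.BilinForm ℂ W,
        (∀ x y : W, B x y = B y x) ∧
        (∀ (s : G) (x y : W), B (ρ s x) (ρ s y) = B x y) ∧
        (∀ x : W, (∀ y : W, B x y = 0) → x = 0)) := by
  letI : Fintype G := Fintype.ofFinite G
  let e : W ≃ₗ[ℂ] EuclideanSpace ℂ (Fin (Module.finrank ℂ W)) :=
    (Module.finBasis ℂ W).equivFun.trans
      (WithLp.linearEquiv 2 ℂ (Fin (Module.finrank ℂ W) → ℂ)).symm
  let core : InnerProductSpace.Core ℂ W :=
    { inner := fun x y => ∑ s : G, @inner ℂ _ _ (e (ρ s x)) (e (ρ s y))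
      conj_inner_symm := by
        intro x y
        rw [map_sum]
        exact Finset.sum_congr rfl fun s _ => inner_conj_symm _ _
      re_inner_nonneg := by
        intro x
        rw [map_sum]
        exact Finset.sum_nonneg fun s _ => inner_self_nonneg
      add_left := by
        intro x y z
        rw [← Finset.sum_add_distrib]
        exact Finset.sum_congr rfl fun s _ => by rw [map_add, map_add, inner_add_left]
      smul_left := by
        intro x y r
        rw [Finset.mul_sum]
        exact Finset.sum_congr rfl fun s _ => by rw [map_smul, map_smul, inner_smul_left]
      definite := by
        intro x h
        have h1 : ∑ s : G, RCLike.re (@inner ℂ _ _ (e (ρ s x)) (e (ρ s x))) = 0 := by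
          rw [← map_sum, h, map_zero]
        have h2 : ∀ s ∈ Finset.univ,
            (0:ℝ) ≤ RCLike.re (@inner ℂ _ _ (e (ρ s x)) (e (ρ s x))) :=
          fun s _ => inner_self_nonneg
        have h3 := (Finset.sum_eq_zero_iff_of_nonneg h2).mp h1 1 (Finset.mem_univ 1)
        have h4 : @inner ℂ _ _ (e (ρ 1 x)) (e (ρ 1 x)) = 0 := by
          have him := inner_self_im (𝕜 := ℂ) (e (ρ 1 x))
          exact RCLike.ext (by simpa using h3) (by simpa using him)
        have h5 : e (ρ 1 x) = 0 := inner_self_eq_zero.mp h4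
        have h6 : ρ 1 x = 0 := by
          apply e.injective
          simpa using h5
        simpa using h6 }
  letI : NormedAddCommGroup W := core.toNormedAddCommGroup
  letI : InnerProductSpace ℂ W := InnerProductSpace.ofCore core.toCore
  have hinner : ∀ x y : W,
      (⟪x, y⟫ : ℂ) = ∑ s : G, @inner ℂ _ _ (e (ρ s x)) (e (ρ s y)) := fun x y => rfl
  have hinv : ∀ (t : G) (x y : W), ⟪ρ t x, ρ t y⟫ = ⟪x, y⟫ := by
    intro t x y
    rw [hinner, hinner]
    rw [← Equiv.sum_comp (Equiv.mulRight t)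
      (fun s => @inner ℂ _ _ (e (ρ s x)) (e (ρ s y)))]
    refine Finset.sum_congr rfl fun s _ => ?_
    have : ∀ z : W, ρ (s * t) z = ρ s (ρ t z) := by
      intro z; rw [map_mul, Module.End.mul_apply]
    simp [Equiv.coe_mulRight, this]
  constructor
  · rintro ⟨R, hR, hRρ⟩
    exact aux_forward ρ hinv R hR hRρ
  · rintro ⟨B, h1, h2, h3⟩
    exact aux_backward ρ hinv B h1 h2 h3
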